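/- Let F be a binary relation on a finite set X, U a forward invariant set (F(U) ⊆ U) and V a backward invariant set (F⁻¹(V) ⊆ V). Then the maximal invariant set in U ∩ V equals ω(U) ∩ α(V), where ω(U) = ⋂_{k≥0} ⋃_{n≥k} Fⁿ(U) and α(V) = ⋂_{k≥0} ⋃_{n≥k} F⁻ⁿ(V). -/

import Mathlib

/-- Image of a set under a binary relation. -/
def imageRel {X : Type*} (F : X → X → Prop) (U : Set X) : Set X :=
  {y | ∃ x ∈ U, F x y}

/-- Preimage of a set under a binary relation. -/
def preRel {X : Type*} (F : X → X → Prop) (U : Set X) : Set X :=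
  {x | ∃ y ∈ U, F x y}

/-- Omega limit set of a set under a binary relation. -/
def omegaRel {X : Type*} (F : X → X → Prop) (U : Set X) : Set X :=
  ⋂ k : ℕ, ⋃ n ≥ k, (imageRel F)^[n] U

/-- Alpha limit set of a set under a binary relation. -/
def alphaRel {X : Type*} (F : X → X → Prop) (U : Set X) : Set X :=
  ⋂ k : ℕ, ⋃ n ≥ k, (preRel F)^[n] U

/-- The maximal invariant set inside a set `W`. -/
def invRel {X : Type*} (F : X → X → Prop) (W : Set X) : Set X :=
  ⋃₀ {S | S ⊆ W ∧ S ⊆ imageRel F S ∧ S ⊆ preRel F S}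

lemma preRel_eq_imageRel_flip {X : Type*} (F : X → X → Prop) :
    preRel F = imageRel (flip F) := rfl

lemma alphaRel_eq_omegaRel_flip {X : Type*} (F : X → X → Prop) :
    alphaRel F = omegaRel (flip F) := rfl

lemma imageRel_mono {X : Type*} (F : X → X → Prop) : Monotone (imageRel F) := by
  rintro A B h y ⟨x, hx, hf⟩
  exact ⟨x, h hx, hf⟩

lemma iter_antitone {X : Type*} (F : X → X → Prop) (U : Set X)
    (hU : imageRel F U ⊆ U) : Antitone (fun n => (imageRel F)^[n] U) := by
  apply antitone_nat_of_succ_le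
  intro n
  have : (imageRel F)^[n + 1] U = (imageRel F)^[n] (imageRel F U) :=
    Function.iterate_succ_apply _ _ _
  rw [this]
  exact (imageRel_mono F).iterate n hU

lemma omegaRel_eq_iInter {X : Type*} (F : X → X → Prop) (U : Set X)
    (hU : imageRel F U ⊆ U) :
    omegaRel F U = ⋂ k : ℕ, (imageRel F)^[k] U := by
  unfold omegaRel
  refine Set.iInter_congr fun k => le_antisymm ?_ ?_
  · apply Set.iUnion₂_subset
    intro n hn
    exact iter_antitone F U hU hn
  · intro x hx
    exact Set.mem_iUnion₂.2 ⟨k, le_refl k, hx⟩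

lemma omegaRel_subset {X : Type*} (F : X → X → Prop) (U : Set X)
    (hU : imageRel F U ⊆ U) : omegaRel F U ⊆ U := by
  rw [omegaRel_eq_iInter F U hU]
  exact Set.iInter_subset _ 0

lemma omegaRel_fixed {X : Type*} [Finite X] (F : X → X → Prop) (U : Set X)
    (hU : imageRel F U ⊆ U) : imageRel F (omegaRel F U) = omegaRel F U := by
  set g : ℕ → Set X := fun n => (imageRel F)^[n] U with hg
  have hanti : Antitone g := iter_antitone F U hU
  -- stabilization
  obtain ⟨a, ⟨N, hNa⟩, hmin⟩ : ∃ a ∈ Set.range g, ∀ a' ∈ Set.range g, id a' ≤ id a → id a = id a' := by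
    obtain ⟨i, hi, hm⟩ := Set.Finite.exists_minimalFor id (Set.range g) (Set.range g).toFinite
      ⟨g 0, Set.mem_range_self 0⟩
    exact ⟨i, hi, fun j hj hle => le_antisymm (hm hj hle) hle⟩
  have hstab : ∀ n ≥ N, g n = g N := by
    intro n hn
    have h1 : g n ≤ g N := hanti hn
    have := hmin (g n) (Set.mem_range_self n) (by simpa [hNa] using h1)
    simpa [hNa] using this.symm
  have homega : omegaRel F U = g N := by
    rw [omegaRel_eq_iInter F U hU]
    apply le_antisymm
    · exact Set.iInter_subset _ N
    · apply Set.subset_iInter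
      intro k
      rcases le_or_gt k N with h | h
      · exact hanti h
      · exact (hstab k h.le).ge
  rw [homega]
  have : imageRel F (g N) = g (N + 1) :=
    (Function.iterate_succ_apply' (imageRel F) N U).symm
  rw [this, hstab (N + 1) (by omega)]

lemma invariant_subset_omega {X : Type*} (F : X → X → Prop) (U S : Set X)
    (hSU : S ⊆ U) (hS : S ⊆ imageRel F S) : S ⊆ omegaRel F U := by
  have key : ∀ n, S ⊆ (imageRel F)^[n] U := by
    intro n
    induction n with
    | zero => exact hSU
    | succ n ih =>
      calc S ⊆ imageRel F S := hS
        _ ⊆ imageRel F ((imageRel F)^[n] U) := imageRel_mono F ih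
        _ = (imageRel F)^[n + 1] U := (Function.iterate_succ_apply' _ _ _).symm
  apply Set.subset_iInter
  intro k
  intro x hx
  exact Set.mem_iUnion₂.2 ⟨k, le_refl k, key k hx⟩

/-- For `U` forward invariant and `V` backward invariant, the maximal
invariant set in `U ∩ V` is `ω(U) ∩ α(V)`. -/
theorem inv_inter_eq_omega_inter_alpha {X : Type*} [Finite X]
    (F : X → X → Prop) (U V : Set X)
    (hU : imageRel F U ⊆ U) (hV : preRel F V ⊆ V) :
    invRel F (U ∩ V) = omegaRel F U ∩ alphaRel F V := by
  have hV' : imageRel (flip F) V ⊆ V := by rw [← preRel_eq_imageRel_flip]; exact hV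
  have hωU : omegaRel F U ⊆ U := omegaRel_subset F U hU
  have hαV : alphaRel F V ⊆ V := by
    rw [alphaRel_eq_omegaRel_flip]; exact omegaRel_subset _ V hV'
  have hωfix : imageRel F (omegaRel F U) = omegaRel F U := omegaRel_fixed F U hU
  have hαfix : preRel F (alphaRel F V) = alphaRel F V := by
    rw [alphaRel_eq_omegaRel_flip, preRel_eq_imageRel_flip]
    exact omegaRel_fixed (flip F) V hV'
  apply le_antisymm
  · apply Set.sUnion_subset
    rintro S ⟨hSW, hS1, hS2⟩
    have h1 : S ⊆ omegaRel F U :=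
      invariant_subset_omega F U S (hSW.trans Set.inter_subset_left) hS1
    have h2 : S ⊆ alphaRel F V := by
      rw [alphaRel_eq_omegaRel_flip]
      exact invariant_subset_omega (flip F) V S (hSW.trans Set.inter_subset_right)
        (by rw [← preRel_eq_imageRel_flip]; exact hS2)
    exact Set.subset_inter h1 h2
  · apply Set.subset_sUnion_of_mem
    refine ⟨Set.inter_subset_inter hωU hαV, ?_, ?_⟩
    · rintro z ⟨hzω, hzα⟩
      obtain ⟨x, hxω, hxz⟩ : z ∈ imageRel F (omegaRel F U) := hωfix.ge hzω
      have hxα : x ∈ alphaRel F V := hαfix.le (⟨z, hzα, hxz⟩ : x ∈ preRel F (alphaRel F V))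
      exact ⟨x, ⟨hxω, hxα⟩, hxz⟩
    · rintro z ⟨hzω, hzα⟩
      obtain ⟨y, hyα, hzy⟩ : z ∈ preRel F (alphaRel F V) := hαfix.ge hzα
      have hyω : y ∈ omegaRel F U := hωfix.le (⟨z, hzω, hzy⟩ : y ∈ imageRel F (omegaRel F U))
      exact ⟨y, ⟨hyω, hyα⟩, hzy⟩
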